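/- arXiv:1804.10407 — 2 statements merged into one kernel-verified Lean document; each statement's English description precedes it below -/
import Mathlib

section
/- If A ∈ ℂ^{n×n} is half-radial (‖A‖ = 2·r(A)), then the multiplicity of the zero singular value of A is at least the multiplicity of the maximum singular value σ_max. -/
open scoped InnerProductSpace

noncomputable def toCLM {n : ℕ} (A : Matrix (Fin n) (Fin n) ℂ) :
    EuclideanSpace ℂ (Fin n) →L[ℂ] EuclideanSpace ℂ (Fin n) :=
  Matrix.toEuclideanCLM (𝕜 := ℂ) A

noncomputable def opNorm {n : ℕ} (A : Matrix (Fin n) (Fin n) ℂ) : ℝ := ‖toCLM A‖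

noncomputable def numRadius {n : ℕ} (A : Matrix (Fin n) (Fin n) ℂ) : ℝ :=
  sSup {r : ℝ | ∃ z : EuclideanSpace ℂ (Fin n), ‖z‖ = 1 ∧ r = ‖(⟪z, toCLM A z⟫_ℂ)‖}

/-- A real quadratic `p*t + q*t^2` that is nonpositive for all `t` has `p = 0`. -/
lemma quad_aux {p q : ℝ} (h : ∀ t : ℝ, p * t + q * t ^ 2 ≤ 0) : p = 0 := by
  by_contra hp
  rcases lt_or_gt_of_ne hp with hneg | hpos
  · set ε : ℝ := (-p) / (|q| + 1) with hεdef
    have h1 : (0:ℝ) < ε := div_pos (by linarith) (by positivity)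
    have key := h (-ε)
    have hc : (|q| + 1) * ε = -p := by
      rw [hεdef, mul_comm]; exact div_mul_cancel₀ _ (by positivity)
    have h2 : p * (-ε) = (|q| + 1) * (ε * ε) := by nlinarith [hc]
    have h3 : -|q| * (ε * ε) ≤ q * (ε * ε) := by
      apply mul_le_mul_of_nonneg_right (neg_abs_le q) (by positivity)
    nlinarith [mul_pos h1 h1]
  · set ε : ℝ := p / (|q| + 1) with hεdef
    have h1 : (0:ℝ) < ε := div_pos (by linarith) (by positivity)
    have key := h ε
    have hc : (|q| + 1) * ε = p := by
      rw [hεdef, mul_comm]; exact div_mul_cancel₀ _ (by positivity)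
    have h2 : p * ε = (|q| + 1) * (ε * ε) := by nlinarith [hc]
    have h3 : -|q| * (ε * ε) ≤ q * (ε * ε) := by
      apply mul_le_mul_of_nonneg_right (neg_abs_le q) (by positivity)
    nlinarith [mul_pos h1 h1]

/-- Every nonzero complex number has a "phase square root": a unit `λ` with `λ² z = |z|`. -/
lemma phase_sqrt (z : ℂ) (hz : z ≠ 0) :
    ∃ lam : ℂ, ‖lam‖ = 1 ∧ lam ^ 2 * z = ‖z‖ := by
  obtain ⟨mu, hmu⟩ := IsAlgClosed.exists_pow_nat_eq
    ((starRingEnd ℂ) z * (‖z‖ : ℂ)⁻¹) (n := 2) (by norm_num)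
  have hz' : ‖z‖ ≠ 0 := norm_ne_zero_iff.mpr hz
  have hz'' : ((‖z‖ : ℝ) : ℂ) ≠ 0 := by exact_mod_cast hz'
  refine ⟨mu, ?_, ?_⟩
  · have habs : ‖mu‖ ^ 2 = 1 := by
      rw [← norm_pow, hmu]
      simp [mul_inv_cancel₀ hz']
    nlinarith [norm_nonneg mu]
  · rw [hmu]
    have hcz : (starRingEnd ℂ) z * z = ((‖z‖ : ℝ) : ℂ) ^ 2 := by
      rw [Complex.conj_mul']
    field_simp [hz'']
    linear_combination hcz

lemma numRadius_bound {n : ℕ} (A : Matrix (Fin n) (Fin n) ℂ) (z : EuclideanSpace ℂ (Fin n)) :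
    ‖⟪z, toCLM A z⟫_ℂ‖ ≤ numRadius A * ‖z‖ ^ 2 := by
  have hbdd : BddAbove {r : ℝ | ∃ z : EuclideanSpace ℂ (Fin n), ‖z‖ = 1 ∧
      r = ‖⟪z, toCLM A z⟫_ℂ‖} := by
    refine ⟨‖toCLM A‖, ?_⟩
    rintro r ⟨w, hw, rfl⟩
    calc ‖⟪w, toCLM A w⟫_ℂ‖ = ‖⟪w, toCLM A w⟫_ℂ‖ := rfl
      _ ≤ ‖w‖ * ‖toCLM A w‖ := norm_inner_le_norm _ _
      _ ≤ ‖w‖ * (‖toCLM A‖ * ‖w‖) := by gcongr; exact (toCLM A).le_opNorm w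
      _ = ‖toCLM A‖ := by rw [hw]; ring
  rcases eq_or_ne z 0 with rfl | hz
  · simp
  · have hz' : (0:ℝ) < ‖z‖ := norm_pos_iff.mpr hz
    set w : EuclideanSpace ℂ (Fin n) := (‖z‖⁻¹ : ℂ) • z with hw
    have hwn : ‖w‖ = 1 := by
      rw [hw, norm_smul]
      simp [hz'.ne']
    have hle : ‖⟪w, toCLM A w⟫_ℂ‖ ≤ numRadius A :=
      le_csSup hbdd ⟨w, hwn, rfl⟩
    have hinner : ⟪w, toCLM A w⟫_ℂ = (‖z‖⁻¹ : ℂ) * (‖z‖⁻¹ : ℂ) * ⟪z, toCLM A z⟫_ℂ := by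
      rw [hw, map_smul, inner_smul_left, inner_smul_right]
      simp [Complex.conj_ofReal]
      ring
    rw [hinner] at hle
    have habs : ‖(‖z‖⁻¹ : ℂ) * (‖z‖⁻¹ : ℂ) * ⟪z, toCLM A z⟫_ℂ‖
        = ‖z‖⁻¹ * ‖z‖⁻¹ * ‖⟪z, toCLM A z⟫_ℂ‖ := by
      simp [abs_of_pos (inv_pos.mpr hz')]
    rw [habs] at hle
    have := mul_le_mul_of_nonneg_right hle (le_of_lt (by positivity : (0:ℝ) < ‖z‖ ^ 2))
    have hfin : ‖z‖⁻¹ * ‖z‖⁻¹ * ‖⟪z, toCLM A z⟫_ℂ‖ * ‖z‖ ^ 2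
        = ‖⟪z, toCLM A z⟫_ℂ‖ := by
      rw [sq]
      field_simp
    linarith [this, hfin.symm.le, hfin.le]

lemma key_ineq_sq {n : ℕ} (A : Matrix (Fin n) (Fin n) ℂ) (x y : EuclideanSpace ℂ (Fin n)) :
    ‖⟪x, toCLM A y⟫_ℂ + ⟪y, toCLM A x⟫_ℂ‖ ≤ numRadius A * (‖x‖ ^ 2 + ‖y‖ ^ 2) := by
  set T := toCLM A
  have expand : ⟪x + y, T (x + y)⟫_ℂ - ⟪x - y, T (x - y)⟫_ℂ
      = 2 * (⟪x, T y⟫_ℂ + ⟪y, T x⟫_ℂ) := by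
    simp only [map_add, map_sub, inner_add_left, inner_add_right, inner_sub_left,
      inner_sub_right]
    ring
  have h1 := numRadius_bound A (x + y)
  have h2 := numRadius_bound A (x - y)
  have hpar : ‖x + y‖ ^ 2 + ‖x - y‖ ^ 2 = 2 * (‖x‖ ^ 2 + ‖y‖ ^ 2) := by
    have := parallelogram_law_with_norm ℂ x y
    nlinarith [this]
  have habs : ‖2 * (⟪x, T y⟫_ℂ + ⟪y, T x⟫_ℂ)‖
      ≤ ‖⟪x + y, T (x + y)⟫_ℂ‖ + ‖⟪x - y, T (x - y)⟫_ℂ‖ := by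
    rw [← expand]
    exact norm_sub_le _ _
  have h2abs : ‖2 * (⟪x, T y⟫_ℂ + ⟪y, T x⟫_ℂ)‖
      = 2 * ‖⟪x, T y⟫_ℂ + ⟪y, T x⟫_ℂ‖ := by
    rw [norm_mul]; norm_num
  rw [h2abs] at habs
  have h3 : numRadius A * ‖x + y‖ ^ 2 + numRadius A * ‖x - y‖ ^ 2
      = 2 * (numRadius A * (‖x‖ ^ 2 + ‖y‖ ^ 2)) := by linear_combination (numRadius A) * hpar
  linarith

lemma key_ineq {n : ℕ} (A : Matrix (Fin n) (Fin n) ℂ) (x y : EuclideanSpace ℂ (Fin n)) :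
    ‖⟪x, toCLM A y⟫_ℂ + ⟪y, toCLM A x⟫_ℂ‖ ≤ 2 * numRadius A * (‖x‖ * ‖y‖) := by
  set T := toCLM A
  rcases eq_or_ne x 0 with rfl | hx
  · simp
  rcases eq_or_ne y 0 with rfl | hy
  · simp
  have hx' : (0:ℝ) < ‖x‖ := norm_pos_iff.mpr hx
  have hy' : (0:ℝ) < ‖y‖ := norm_pos_iff.mpr hy
  set t : ℝ := Real.sqrt (‖y‖ / ‖x‖) with ht
  have ht' : (0:ℝ) < t := Real.sqrt_pos.mpr (by positivity)
  have ht2 : t ^ 2 = ‖y‖ / ‖x‖ := Real.sq_sqrt (by positivity)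
  have key := key_ineq_sq A ((t : ℂ) • x) ((t⁻¹ : ℂ) • y)
  have hinner : ⟪(t : ℂ) • x, T ((t⁻¹ : ℂ) • y)⟫_ℂ + ⟪(t⁻¹ : ℂ) • y, T ((t : ℂ) • x)⟫_ℂ
      = ⟪x, T y⟫_ℂ + ⟪y, T x⟫_ℂ := by
    have htc : ((t : ℝ) : ℂ) ≠ 0 := by exact_mod_cast ht'.ne'
    simp only [map_smul, inner_smul_left, inner_smul_right, map_inv₀, Complex.conj_ofReal]
    field_simp
  rw [hinner] at key
  have hn1 : ‖(t : ℂ) • x‖ ^ 2 = t ^ 2 * ‖x‖ ^ 2 := by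
    rw [norm_smul]
    simp [Complex.norm_real, abs_of_pos ht']
    ring
  have hn2 : ‖(t⁻¹ : ℂ) • y‖ ^ 2 = (t ^ 2)⁻¹ * ‖y‖ ^ 2 := by
    rw [norm_smul]
    push_cast
    simp [Complex.norm_real, abs_of_pos (inv_pos.mpr ht'), abs_of_pos ht']
    ring
  rw [hn1, hn2, ht2] at key
  have heq : ‖y‖ / ‖x‖ * ‖x‖ ^ 2 + (‖y‖ / ‖x‖)⁻¹ * ‖y‖ ^ 2 = 2 * (‖x‖ * ‖y‖) := by
    field_simp
    ring
  calc ‖⟪x, T y⟫_ℂ + ⟪y, T x⟫_ℂ‖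
      ≤ numRadius A * (‖y‖ / ‖x‖ * ‖x‖ ^ 2 + (‖y‖ / ‖x‖)⁻¹ * ‖y‖ ^ 2) := key
    _ = 2 * numRadius A * (‖x‖ * ‖y‖) := by rw [heq]; ring

lemma opNorm_pos {n : ℕ} (A : Matrix (Fin n) (Fin n) ℂ) (hA : A ≠ 0) : 0 < opNorm A := by
  have hT : toCLM A ≠ 0 := by
    intro h0
    exact hA ((Matrix.toEuclideanCLM (𝕜 := ℂ) (n := Fin n)).injective (by rw [map_zero]; exact h0))
  exact norm_pos_iff.mpr hT

lemma orth_unit {n : ℕ} (A : Matrix (Fin n) (Fin n) ℂ) (hA : A ≠ 0)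
    (h : opNorm A = 2 * numRadius A) {x : EuclideanSpace ℂ (Fin n)}
    (hx1 : ‖x‖ = 1) (hx : ‖toCLM A x‖ = opNorm A) (y : EuclideanSpace ℂ (Fin n)) :
    ⟪x, toCLM A y⟫_ℂ = 0 := by
  set T := toCLM A with hT
  set M : ℝ := opNorm A with hM
  have hM0 : 0 < M := opNorm_pos A hA
  set u : EuclideanSpace ℂ (Fin n) := ((M:ℝ)⁻¹ : ℂ) • T x with hu
  have hun : ‖u‖ = 1 := by
    rw [hu, norm_smul, hx]
    have : ‖((M:ℝ)⁻¹ : ℂ)‖ = M⁻¹ := by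
      rw [norm_inv, Complex.norm_real, Real.norm_eq_abs, abs_of_pos hM0]
    rw [this, inv_mul_cancel₀ hM0.ne']
  have hTx : T x = ((M:ℝ) : ℂ) • u := by
    rw [hu, smul_smul]
    have : ((M:ℝ):ℂ) * ((M:ℝ)⁻¹ : ℂ) = 1 := by
      push_cast
      exact mul_inv_cancel₀ (by exact_mod_cast hM0.ne')
    rw [this, one_smul]
  have huTx : ⟪u, T x⟫_ℂ = (M : ℂ) := by
    rw [hTx, inner_smul_right, inner_self_eq_norm_sq_to_K, hun]
    norm_num
  clear_value u
  clear hu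
  -- Stage A : ⟪x, T u⟫ = 0
  have hA' : ⟪x, T u⟫_ℂ = 0 := by
    by_contra ha
    obtain ⟨lam, hlam1, hlam2⟩ := phase_sqrt _ ha
    have key := key_ineq A x (lam • u)
    rw [map_smul, inner_smul_right, inner_smul_left, huTx] at key
    rw [norm_smul, hun, hx1] at key
    have hnl : ‖lam‖ = 1 := hlam1
    rw [hnl] at key
    have hb : (2 : ℝ) * numRadius A * (1 * (1 * 1)) = M := by rw [h]; ring
    rw [hb] at key
    have hmul : lam * (lam * ⟪x, T u⟫_ℂ + (starRingEnd ℂ) lam * (M:ℂ))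
        = ((‖⟪x, T u⟫_ℂ‖ : ℝ) : ℂ) + (M:ℂ) := by
      have hcl : lam * (starRingEnd ℂ) lam = 1 := by
        rw [Complex.mul_conj]
        norm_cast
        rw [← Complex.sq_norm, hlam1]
        norm_num
      calc lam * (lam * ⟪x, T u⟫_ℂ + (starRingEnd ℂ) lam * (M:ℂ))
          = lam ^ 2 * ⟪x, T u⟫_ℂ + (lam * (starRingEnd ℂ) lam) * (M:ℂ) := by ring
        _ = ((‖⟪x, T u⟫_ℂ‖ : ℝ) : ℂ) + (M:ℂ) := by rw [hlam2, hcl]; ring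
    have key2 : ‖((‖⟪x, T u⟫_ℂ‖ : ℝ) : ℂ) + (M:ℂ)‖ ≤ M := by
      rw [← hmul, norm_mul, hlam1, one_mul]
      exact key
    have : ‖((‖⟪x, T u⟫_ℂ‖ : ℝ) : ℂ) + (M:ℂ)‖
        = ‖⟪x, T u⟫_ℂ‖ + M := by
      rw [← Complex.ofReal_add, Complex.norm_real, Real.norm_eq_abs]
      exact abs_of_pos (by positivity)
    rw [this] at key2
    have h0 : ‖⟪x, T u⟫_ℂ‖ = 0 :=
      le_antisymm (by linarith) (norm_nonneg _)
    exact ha (by simpa using h0)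
  -- Stage B : real parts vanish
  have hre : ∀ z : EuclideanSpace ℂ (Fin n), (⟪x, T z⟫_ℂ).re = 0 := by
    intro z
    set a : ℂ := ⟪x, T z⟫_ℂ with hadef
    set c : ℂ := ⟪u, z⟫_ℂ with hcdef
    set s : ℂ := a + (M:ℂ) * (starRingEnd ℂ) c with hsdef
    have hyTx : ⟪z, T x⟫_ℂ = (M:ℂ) * (starRingEnd ℂ) c := by
      rw [hTx, inner_smul_right, hcdef, ← inner_conj_symm]
    have hineq : ∀ t : ℝ, (2*M*s.re - 2*M^2*c.re) * t + (s.re^2 + s.im^2 - M^2*‖z‖^2) * t^2 ≤ 0 := by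
      intro t
      have key := key_ineq A x (u + (t:ℂ) • z)
      have hlhs : ⟪x, T (u + (t:ℂ) • z)⟫_ℂ + ⟪u + (t:ℂ) • z, T x⟫_ℂ = (M:ℂ) + (t:ℂ) * s := by
        rw [map_add, map_smul, inner_add_right, inner_smul_right, inner_add_left,
          inner_smul_left, hA', huTx, hyTx, hsdef, hadef]
        simp [Complex.conj_ofReal]
        ring
      rw [hlhs, hx1] at key
      have hnrm : ‖u + (t:ℂ) • z‖ ^ 2 = 1 + 2*(t * c.re) + t^2*‖z‖^2 := by
        rw [@norm_add_sq ℂ, inner_smul_right, hun]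
        simp [RCLike.re_to_complex, norm_smul, Complex.norm_real, ← hcdef]
        ring_nf
        rw [sq_abs]
        ring
      have habs2 : ‖(M:ℂ) + (t:ℂ) * s‖ ^ 2 = (M + t*s.re)^2 + (t*s.im)^2 := by
        rw [Complex.sq_norm, Complex.normSq_apply]
        simp
        ring
      have hsq : ‖(M:ℂ) + (t:ℂ)*s‖ ^ 2 ≤ (2 * numRadius A * (1 * ‖u + (t:ℂ)•z‖))^2 := by
        apply pow_le_pow_left₀ (norm_nonneg _) key
      have hrhs : (2 * numRadius A * (1 * ‖u + (t:ℂ)•z‖))^2 = M^2 * ‖u + (t:ℂ)•z‖^2 := by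
        rw [h]; ring
      rw [habs2, hrhs, hnrm] at hsq
      nlinarith [hsq]
    have hp := quad_aux hineq
    have hsre : s.re = M * c.re := by
      have h2 : (2*M) * s.re = (2*M) * (M * c.re) := by linear_combination hp
      exact mul_left_cancel₀ (by positivity) h2
    have : s.re = a.re + M * c.re := by
      rw [hsdef]
      simp [Complex.add_re, Complex.mul_re, Complex.conj_re, Complex.conj_im]
    rw [this] at hsre
    linarith
  have h1 := hre y
  have h2 := hre (Complex.I • y)
  rw [map_smul, inner_smul_right] at h2
  simp [Complex.mul_re] at h2
  exact Complex.ext h1 (by simpa using h2)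

theorem stmt10 {n : ℕ} (A : Matrix (Fin n) (Fin n) ℂ) (hA : A ≠ 0)
    (h : opNorm A = 2 * numRadius A) :
    Module.finrank ℂ (Submodule.span ℂ
        {x : EuclideanSpace ℂ (Fin n) | ‖toCLM A x‖ = opNorm A * ‖x‖}) ≤
      Module.finrank ℂ (LinearMap.ker ((toCLM A : EuclideanSpace ℂ (Fin n) →ₗ[ℂ] EuclideanSpace ℂ (Fin n)))) := by
  classical
  have horth : ∀ x ∈ {x : EuclideanSpace ℂ (Fin n) | ‖toCLM A x‖ = opNorm A * ‖x‖},
      ∀ y, ⟪x, toCLM A y⟫_ℂ = 0 := by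
    intro x hx y
    rcases eq_or_ne x 0 with rfl | hx0
    · simp
    · have hxn : 0 < ‖x‖ := norm_pos_iff.mpr hx0
      have hx'1 : ‖(‖x‖⁻¹ : ℂ) • x‖ = 1 := by
        rw [norm_smul, norm_inv, Complex.norm_real, Real.norm_eq_abs, abs_of_pos hxn]
        exact inv_mul_cancel₀ hxn.ne'
      have hx' : ‖toCLM A ((‖x‖⁻¹ : ℂ) • x)‖ = opNorm A := by
        rw [map_smul, norm_smul, norm_inv, Complex.norm_real, Real.norm_eq_abs,
          abs_of_pos hxn, hx]
        field_simp
      have h0 := orth_unit A hA h hx'1 hx' y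
      rw [inner_smul_left] at h0
      have : ((starRingEnd ℂ) ((‖x‖ : ℂ)⁻¹)) ≠ 0 := by
        simp [Complex.conj_ofReal, hxn.ne']
      exact (mul_eq_zero.mp h0).resolve_left this
  have hspan : Submodule.span ℂ {x : EuclideanSpace ℂ (Fin n) | ‖toCLM A x‖ = opNorm A * ‖x‖}
      ≤ (LinearMap.range ((toCLM A : EuclideanSpace ℂ (Fin n) →ₗ[ℂ] EuclideanSpace ℂ (Fin n))))ᗮ := by
    rw [Submodule.span_le]
    intro x hx
    rw [SetLike.mem_coe, Submodule.mem_orthogonal]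
    rintro u ⟨y, rfl⟩
    rw [← inner_conj_symm, ContinuousLinearMap.coe_coe, horth x hx y, map_zero]
  have hle := Submodule.finrank_mono hspan
  have h1 : Module.finrank ℂ (LinearMap.range ((toCLM A : EuclideanSpace ℂ (Fin n) →ₗ[ℂ] EuclideanSpace ℂ (Fin n))))
      + Module.finrank ℂ ((LinearMap.range ((toCLM A : EuclideanSpace ℂ (Fin n) →ₗ[ℂ] EuclideanSpace ℂ (Fin n))))ᗮ) = n := by
    rw [Submodule.finrank_add_finrank_orthogonal]
    simp [finrank_euclideanSpace_fin]
  have h2 : Module.finrank ℂ (LinearMap.range ((toCLM A : EuclideanSpace ℂ (Fin n) →ₗ[ℂ] EuclideanSpace ℂ (Fin n))))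
      + Module.finrank ℂ (LinearMap.ker ((toCLM A : EuclideanSpace ℂ (Fin n) →ₗ[ℂ] EuclideanSpace ℂ (Fin n)))) = n := by
    have := LinearMap.finrank_range_add_finrank_ker ((toCLM A) : EuclideanSpace ℂ (Fin n) →ₗ[ℂ] EuclideanSpace ℂ (Fin n))
    simpa [finrank_euclideanSpace_fin] using this
  omega
end

section
/- The 3×3 matrix A with entries A(3,1) = 1, A(2,2) = 0.9 and all other entries zero satisfies ‖A‖ = 1, U_max(A) ⊆ ker(A), V_max(A) ⊆ ker(A*), but r(A) ≥ 0.9 > 1/2, so A is not half-radial. -/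
open scoped InnerProductSpace

lemma toCLM_apply {n : ℕ} (A : Matrix (Fin n) (Fin n) ℂ) (x : EuclideanSpace ℂ (Fin n)) (i : Fin n) :
    toCLM A x i = ∑ j, A i j * x j := by
  have := Matrix.ofLp_toEuclideanCLM (𝕜 := ℂ) A x
  have h2 := congrFun this i
  simpa [toCLM, Matrix.mulVec, dotProduct] using h2

lemma adjoint_toCLM {n : ℕ} (A : Matrix (Fin n) (Fin n) ℂ) :
    ContinuousLinearMap.adjoint (toCLM A) = toCLM (star A) := by
  rw [← ContinuousLinearMap.star_eq_adjoint]
  simp [toCLM, ← map_star]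

lemma normsq3 (x : EuclideanSpace ℂ (Fin 3)) :
    ‖x‖ ^ 2 = ‖x 0‖ ^ 2 + ‖x 1‖ ^ 2 + ‖x 2‖ ^ 2 := by
  rw [EuclideanSpace.norm_eq, Real.sq_sqrt (by positivity), Fin.sum_univ_three]

lemma c09 : ‖(0.9 : ℂ)‖ = 0.9 := by
  have : (0.9 : ℂ) = ((0.9 : ℝ) : ℂ) := by norm_num
  rw [this, Complex.norm_real]; norm_num

theorem stmt11 (A : Matrix (Fin 3) (Fin 3) ℂ)
    (hAdef : A = !![0, 0, 0; 0, (0.9 : ℂ), 0; 1, 0, 0]) :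
    opNorm A = 1 ∧
    (∀ u : EuclideanSpace ℂ (Fin 3), ‖ContinuousLinearMap.adjoint (toCLM A) u‖ = opNorm A * ‖u‖ →
      toCLM A u = 0) ∧
    (∀ v : EuclideanSpace ℂ (Fin 3), ‖toCLM A v‖ = opNorm A * ‖v‖ →
      ContinuousLinearMap.adjoint (toCLM A) v = 0) ∧
    (0.9 : ℝ) ≤ numRadius A ∧ (1 : ℝ) / 2 < (0.9 : ℝ) ∧
    opNorm A ≠ 2 * numRadius A := by
  subst hAdef
  set M : Matrix (Fin 3) (Fin 3) ℂ := !![0, 0, 0; 0, (0.9 : ℂ), 0; 1, 0, 0] with hM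
  -- pointwise action of A
  have happ : ∀ (x : EuclideanSpace ℂ (Fin 3)),
      toCLM M x 0 = 0 ∧ toCLM M x 1 = (0.9 : ℂ) * x 1 ∧ toCLM M x 2 = x 0 := by
    intro x
    refine ⟨?_, ?_, ?_⟩ <;>
      simp [toCLM_apply, Fin.sum_univ_three, hM]
  -- pointwise action of A*
  have hstar : ∀ (x : EuclideanSpace ℂ (Fin 3)),
      toCLM (star M) x 0 = x 2 ∧ toCLM (star M) x 1 = (0.9 : ℂ) * x 1 ∧
        toCLM (star M) x 2 = 0 := by
    intro x
    have hc : (starRingEnd ℂ) (0.9 : ℂ) = 0.9 := by rw [show (0.9:ℂ) = ((0.9:ℝ):ℂ) by norm_num, Complex.conj_ofReal]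
    refine ⟨?_, ?_, ?_⟩ <;>
      simp [toCLM_apply, Fin.sum_univ_three, hM, Matrix.star_eq_conjTranspose,
        Matrix.conjTranspose_apply, hc]
  -- norm of A x squared
  have hnormA : ∀ (x : EuclideanSpace ℂ (Fin 3)),
      ‖toCLM M x‖ ^ 2 = ‖x 0‖ ^ 2 + (0.9 : ℝ) ^ 2 * ‖x 1‖ ^ 2 := by
    intro x
    obtain ⟨h0, h1, h2⟩ := happ x
    rw [normsq3, h0, h1, h2, norm_mul, c09]
    simp; ring
  have hnormAs : ∀ (x : EuclideanSpace ℂ (Fin 3)),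
      ‖toCLM (star M) x‖ ^ 2 = ‖x 2‖ ^ 2 + (0.9 : ℝ) ^ 2 * ‖x 1‖ ^ 2 := by
    intro x
    obtain ⟨h0, h1, h2⟩ := hstar x
    rw [normsq3, h0, h1, h2, norm_mul, c09]
    simp; ring
  -- operator norm = 1
  have hop : opNorm M = 1 := by
    refine le_antisymm ?_ ?_
    · refine ContinuousLinearMap.opNorm_le_bound _ zero_le_one ?_
      intro x
      rw [one_mul]
      have hle : ‖toCLM M x‖ ^ 2 ≤ ‖x‖ ^ 2 := by
        rw [hnormA, normsq3]
        have h1 := sq_nonneg ‖x 1‖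
        have h2 := sq_nonneg ‖x 2‖
        nlinarith
      nlinarith [norm_nonneg (toCLM M x), norm_nonneg x]
    · have e0 : EuclideanSpace ℂ (Fin 3) := EuclideanSpace.single 0 1
      have h1 : ‖(EuclideanSpace.single 0 1 : EuclideanSpace ℂ (Fin 3))‖ = 1 := by
        simp [EuclideanSpace.norm_single]
      have h2 : ‖toCLM M (EuclideanSpace.single 0 1)‖ = 1 := by
        have := hnormA (EuclideanSpace.single 0 1)
        have hs : ‖toCLM M (EuclideanSpace.single 0 1)‖ ^ 2 = 1 := by
          rw [this]; simp [EuclideanSpace.single_apply]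
        nlinarith [norm_nonneg (toCLM M (EuclideanSpace.single 0 1))]
      have := ContinuousLinearMap.le_opNorm (toCLM M) (EuclideanSpace.single 0 1)
      rw [h1, h2, mul_one] at this
      exact this
  have hrad : (0.9 : ℝ) ≤ numRadius M := by
    have hmem : (0.9 : ℝ) ∈ {r : ℝ | ∃ z : EuclideanSpace ℂ (Fin 3), ‖z‖ = 1 ∧
        r = ‖(⟪z, toCLM M z⟫_ℂ)‖} := by
      refine ⟨EuclideanSpace.single 1 1, by simp [EuclideanSpace.norm_single], ?_⟩
      obtain ⟨h0, h1, h2⟩ := happ (EuclideanSpace.single 1 1)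
      have hinner : ⟪(EuclideanSpace.single 1 1 : EuclideanSpace ℂ (Fin 3)),
          toCLM M (EuclideanSpace.single 1 1)⟫_ℂ = (0.9 : ℂ) := by
        rw [PiLp.inner_apply, Fin.sum_univ_three, h0, h1, h2]
        simp [EuclideanSpace.single_apply]
      rw [hinner, c09]
    have hbdd : BddAbove {r : ℝ | ∃ z : EuclideanSpace ℂ (Fin 3), ‖z‖ = 1 ∧
        r = ‖(⟪z, toCLM M z⟫_ℂ)‖} := by
      refine ⟨1, ?_⟩
      rintro r ⟨z, hz, rfl⟩
      calc ‖(⟪z, toCLM M z⟫_ℂ)‖ ≤ ‖z‖ * ‖toCLM M z‖ := by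
            exact norm_inner_le_norm _ _
        _ ≤ ‖z‖ * (‖toCLM M‖ * ‖z‖) :=
            mul_le_mul_of_nonneg_left (ContinuousLinearMap.le_opNorm _ _) (norm_nonneg _)
        _ = 1 := by rw [hz]; have h : ‖toCLM M‖ = 1 := hop; rw [h]; ring
    exact le_csSup hbdd hmem
  refine ⟨hop, ?_, ?_, hrad, by norm_num, ?_⟩
  · -- U_max ⊆ ker A
    intro u hu
    rw [hop, one_mul, adjoint_toCLM] at hu
    have hsq : ‖toCLM (star M) u‖ ^ 2 = ‖u‖ ^ 2 := by rw [hu]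
    rw [hnormAs, normsq3] at hsq
    have h0 : u 0 = 0 := by
      have := sq_nonneg ‖u 1‖
      have : ‖u 0‖ ^ 2 = 0 := by nlinarith [sq_nonneg ‖u 1‖]
      simpa [pow_eq_zero_iff] using this
    have h1 : u 1 = 0 := by
      have : ‖u 1‖ ^ 2 = 0 := by nlinarith [sq_nonneg ‖u 0‖]
      simpa [pow_eq_zero_iff] using this
    obtain ⟨g0, g1, g2⟩ := happ u
    ext i
    fin_cases i
    · simpa using g0
    · show toCLM M u 1 = 0
      rw [g1, h1, mul_zero]
    · show toCLM M u 2 = 0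
      rw [g2, h0]
  · -- V_max ⊆ ker A*
    intro v hv
    rw [hop, one_mul] at hv
    have hsq : ‖toCLM M v‖ ^ 2 = ‖v‖ ^ 2 := by rw [hv]
    rw [hnormA, normsq3] at hsq
    have h2 : v 2 = 0 := by
      have : ‖v 2‖ ^ 2 = 0 := by nlinarith [sq_nonneg ‖v 1‖]
      simpa [pow_eq_zero_iff] using this
    have h1 : v 1 = 0 := by
      have : ‖v 1‖ ^ 2 = 0 := by nlinarith [sq_nonneg ‖v 2‖]
      simpa [pow_eq_zero_iff] using this
    rw [adjoint_toCLM]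
    obtain ⟨g0, g1, g2⟩ := hstar v
    ext i
    fin_cases i
    · show toCLM (star M) v 0 = 0
      rw [g0, h2]
    · show toCLM (star M) v 1 = 0
      rw [g1, h1, mul_zero]
    · simpa using g2
  · -- 1 ≠ 2 * numRadius
    rw [hop]
    intro h
    linarith
end
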